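/- Type safety for a reference-allocation step: assume ⊢ σ₁ : Γ₁, that v₁ is a name value name(n) with n ∈ X, that Γ₁ ⊢ v₂ : A, that M(n) = p with p ∉ dom(σ₁), then with Γ₂ = (Γ₁, p : Ref p A) and σ₂ = (σ₁, p : v₂) we have ⊢ σ₂ : Γ₂, Γ₂ ⊢ ref p : Ref p A, and the write set {p} of this step satisfies {p} ⊆ M(X). -/
import Mathlib


namespace Stmt15

inductive Ty : Type
  | unit : Ty
  | nm   : Set ℕ → Ty                -- Nm[X]: names drawn from the set X
  | ref  : Set ℕ → Ty → Ty           -- Ref X A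

inductive Val : Type
  | unit : Val
  | name : ℕ → Val
  | ref  : ℕ → Val

abbrev Ctx := ℕ → Option Ty
abbrev Store := ℕ → Option Val

inductive HasTy : Ctx → Val → Ty → Prop
  | unit {Γ} : HasTy Γ .unit .unit
  | name {Γ n X} : n ∈ X → HasTy Γ (.name n) (.nm X)
  | ref {Γ p A} : Γ p = some (.ref {p} A) → HasTy Γ (.ref p) (.ref {p} A)

/-- ⊢ σ : Γ: domains agree, and each location p holds a value of the content
type A recorded by its binding p : Ref {p} A in Γ. -/
def StoreTy (σ : Store) (Γ : Ctx) : Prop :=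
  (∀ p, (σ p).isSome ↔ (Γ p).isSome) ∧
  (∀ p v, σ p = some v → ∃ A, Γ p = some (.ref {p} A) ∧ HasTy Γ v A)

/-- Type safety for a reference-allocation step. -/
theorem ref_allocation (σ₁ : Store) (Γ₁ : Ctx) (v₁ v₂ : Val) (A : Ty)
    (X : Set ℕ) (M : ℕ → ℕ) (n p : ℕ)
    (hσ : StoreTy σ₁ Γ₁)
    (hv₁ : v₁ = .name n) (hn : n ∈ X)
    (hv₂ : HasTy Γ₁ v₂ A)
    (hM : M n = p) (hfresh : σ₁ p = none) :
    StoreTy (Function.update σ₁ p (some v₂))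
        (Function.update Γ₁ p (some (.ref {p} A))) ∧
    HasTy (Function.update Γ₁ p (some (.ref {p} A))) (.ref p) (.ref {p} A) ∧
    ({p} : Set ℕ) ⊆ M '' X := by
  have hΓp : Γ₁ p = none := by
    have := (hσ.1 p).symm
    cases h : Γ₁ p with
    | none => rfl
    | some t => simp [h, hfresh] at this
  have weak : ∀ v B, HasTy Γ₁ v B →
      HasTy (Function.update Γ₁ p (some (.ref {p} A))) v B := by
    intro v B h
    cases h with
    | unit => exact .unit
    | name hmem => exact .name hmem
    | ref hq =>
      rename_i q B'
      have hne : q ≠ p := fun e => by rw [e, hΓp] at hq; cases hq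
      exact .ref (by rw [Function.update_of_ne hne]; exact hq)
  refine ⟨⟨?_, ?_⟩, ?_, ?_⟩
  · intro q
    by_cases hq : q = p
    · subst hq; simp [Function.update_self]
    · simp only [Function.update_of_ne hq]; exact hσ.1 q
  · intro q v hqv
    by_cases hq : q = p
    · subst hq
      simp only [Function.update_self] at hqv ⊢
      cases hqv
      exact ⟨A, rfl, weak _ _ hv₂⟩
    · simp only [Function.update_of_ne hq] at hqv ⊢
      obtain ⟨B, hB, hv⟩ := hσ.2 q v hqv
      exact ⟨B, hB, weak _ _ hv⟩
  · exact .ref (by simp [Function.update_self])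
  · intro x hx
    rcases hx with rfl
    exact ⟨n, hn, hM⟩

end Stmt15
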